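/- For every function a : ℤ/5ℤ → G one has Σ_{i∈ℤ/5ℤ} δ(a_i, a_{i+1}, a_{i+2}, a_{i+3}) = 0 in ⋀[ℤ]² A. (This is the five-term relation satisfied by the elements δ, equation (eq 5term) of the paper.) -/

import Mathlib

noncomputable def wedge (R : Type*) [CommRing R] {M : Type*} [AddCommGroup M] [Module R M]
    (u v : M) : ⋀[R]^2 M :=
  ⟨ExteriorAlgebra.ιMulti R 2 ![u, v],
    ExteriorAlgebra.ιMulti_range R 2 (Set.mem_range_self _)⟩

/-- The additive counterpart of `u(a,b,c,d) ∧ (1 - u(a,b,c,d))`, built from the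
three-variable expression `φ`. -/
noncomputable def phi (R : Type*) [CommRing R] {M G : Type*} [AddCommGroup M] [Module R M]
    [AddCommGroup G] (g : G → M) (x y z : G) : ⋀[R]^2 M :=
  wedge R (g (z + x) + g (z - x)) (g (y + x) + g (y - x))
    + wedge R (g (y + x) + g (y - x)) (g (z + y) + g (z - y))
    + wedge R (g (z + y) + g (z - y)) (g (z + x) + g (z - x))

noncomputable def delta (R : Type*) [CommRing R] {M G : Type*} [AddCommGroup M] [Module R M]
    [AddCommGroup G] (g : G → M) (a b c d : G) : ⋀[R]^2 M :=
  phi R g a b c + phi R g c d a + phi R g b a d + phi R g d c b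

/-- The additive counterpart of the Manin 3-term expression
`g_a ∧ g_b + g_b ∧ g_c + g_c ∧ g_a` with `a + b + c = 0`. -/
noncomputable def psi (R : Type*) [CommRing R] {M G : Type*} [AddCommGroup M] [Module R M]
    [AddCommGroup G] (g : G → M) (a b : G) : ⋀[R]^2 M :=
  wedge R (g a) (g b) + wedge R (g b) (g (-a - b)) + wedge R (g (-a - b)) (g a)

/-- The five-term relation (eq 5term) for the elements `δ`. -/
theorem delta_five_term {A G : Type*} [AddCommGroup A] [AddCommGroup G]
    (g : G → A) (hg : ∀ x : G, g (-x) = g x) (a : ZMod 5 → G) :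
    ∑ i : ZMod 5, delta ℤ g (a i) (a (i + 1)) (a (i + 2)) (a (i + 3)) = 0 := by
  have wc : ∀ u v : A, wedge ℤ v u = - wedge ℤ u v := by
    intro u v
    apply Subtype.ext
    show ExteriorAlgebra.ιMulti ℤ 2 ![v, u] = -(ExteriorAlgebra.ιMulti ℤ 2 ![u, v])
    have h := (ExteriorAlgebra.ιMulti ℤ 2 (M := A)).map_swap ![u, v] (i := 0) (j := 1)
      (by decide)
    rw [← h]
    congr 1
    ext i
    fin_cases i <;> rfl
  have Gs : ∀ x y : G, g (x + y) + g (x - y) = g (y + x) + g (y - x) := by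
    intro x y
    rw [show x - y = -(y - x) by abel, hg, add_comm x y]
  have hsum : ∑ i : ZMod 5, delta ℤ g (a i) (a (i + 1)) (a (i + 2)) (a (i + 3)) =
      delta ℤ g (a 0) (a 1) (a 2) (a 3) + delta ℤ g (a 1) (a 2) (a 3) (a 4)
        + delta ℤ g (a 2) (a 3) (a 4) (a 0) + delta ℤ g (a 3) (a 4) (a 0) (a 1)
        + delta ℤ g (a 4) (a 0) (a 1) (a 2) := by
    show ∑ i : Fin 5, _ = _
    rw [Fin.sum_univ_five]
    rfl
  rw [hsum]
  simp only [delta, phi]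
  simp only [
    Gs (a 0) (a 1),
    Gs (a 0) (a 2),
    Gs (a 0) (a 3),
    Gs (a 0) (a 4),
    Gs (a 1) (a 2),
    Gs (a 1) (a 3),
    Gs (a 1) (a 4),
    Gs (a 2) (a 3),
    Gs (a 2) (a 4),
    Gs (a 3) (a 4),
    ]
  simp only [
    wc (g (a 1 + a 0) + g (a 1 - a 0)) (g (a 2 + a 0) + g (a 2 - a 0)),
    wc (g (a 1 + a 0) + g (a 1 - a 0)) (g (a 2 + a 1) + g (a 2 - a 1)),
    wc (g (a 1 + a 0) + g (a 1 - a 0)) (g (a 3 + a 0) + g (a 3 - a 0)),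
    wc (g (a 1 + a 0) + g (a 1 - a 0)) (g (a 3 + a 1) + g (a 3 - a 1)),
    wc (g (a 1 + a 0) + g (a 1 - a 0)) (g (a 4 + a 0) + g (a 4 - a 0)),
    wc (g (a 1 + a 0) + g (a 1 - a 0)) (g (a 4 + a 1) + g (a 4 - a 1)),
    wc (g (a 2 + a 0) + g (a 2 - a 0)) (g (a 2 + a 1) + g (a 2 - a 1)),
    wc (g (a 2 + a 0) + g (a 2 - a 0)) (g (a 3 + a 0) + g (a 3 - a 0)),
    wc (g (a 2 + a 0) + g (a 2 - a 0)) (g (a 3 + a 2) + g (a 3 - a 2)),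
    wc (g (a 2 + a 0) + g (a 2 - a 0)) (g (a 4 + a 0) + g (a 4 - a 0)),
    wc (g (a 2 + a 0) + g (a 2 - a 0)) (g (a 4 + a 2) + g (a 4 - a 2)),
    wc (g (a 2 + a 1) + g (a 2 - a 1)) (g (a 3 + a 1) + g (a 3 - a 1)),
    wc (g (a 2 + a 1) + g (a 2 - a 1)) (g (a 3 + a 2) + g (a 3 - a 2)),
    wc (g (a 2 + a 1) + g (a 2 - a 1)) (g (a 4 + a 1) + g (a 4 - a 1)),
    wc (g (a 2 + a 1) + g (a 2 - a 1)) (g (a 4 + a 2) + g (a 4 - a 2)),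
    wc (g (a 3 + a 0) + g (a 3 - a 0)) (g (a 3 + a 1) + g (a 3 - a 1)),
    wc (g (a 3 + a 0) + g (a 3 - a 0)) (g (a 3 + a 2) + g (a 3 - a 2)),
    wc (g (a 3 + a 0) + g (a 3 - a 0)) (g (a 4 + a 0) + g (a 4 - a 0)),
    wc (g (a 3 + a 0) + g (a 3 - a 0)) (g (a 4 + a 3) + g (a 4 - a 3)),
    wc (g (a 3 + a 1) + g (a 3 - a 1)) (g (a 3 + a 2) + g (a 3 - a 2)),
    wc (g (a 3 + a 1) + g (a 3 - a 1)) (g (a 4 + a 1) + g (a 4 - a 1)),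
    wc (g (a 3 + a 1) + g (a 3 - a 1)) (g (a 4 + a 3) + g (a 4 - a 3)),
    wc (g (a 3 + a 2) + g (a 3 - a 2)) (g (a 4 + a 2) + g (a 4 - a 2)),
    wc (g (a 3 + a 2) + g (a 3 - a 2)) (g (a 4 + a 3) + g (a 4 - a 3)),
    wc (g (a 4 + a 0) + g (a 4 - a 0)) (g (a 4 + a 1) + g (a 4 - a 1)),
    wc (g (a 4 + a 0) + g (a 4 - a 0)) (g (a 4 + a 2) + g (a 4 - a 2)),
    wc (g (a 4 + a 0) + g (a 4 - a 0)) (g (a 4 + a 3) + g (a 4 - a 3)),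
    wc (g (a 4 + a 1) + g (a 4 - a 1)) (g (a 4 + a 2) + g (a 4 - a 2)),
    wc (g (a 4 + a 1) + g (a 4 - a 1)) (g (a 4 + a 3) + g (a 4 - a 3)),
    wc (g (a 4 + a 2) + g (a 4 - a 2)) (g (a 4 + a 3) + g (a 4 - a 3)),
    ]
  abel
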